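/- (Sklar's theorem, existence, bivariate case) Let A and B be real-valued random variables on a common probability space with joint CDF H(a,b) = P(A ≤ a, B ≤ b) and marginal CDFs Φ_A and Φ_B. Then there exists a 2-copula C such that H(a,b) = C(Φ_A(a), Φ_B(b)) for all a, b ∈ ℝ. -/

import Mathlib

open MeasureTheory
open Set

noncomputable section SklarAux

namespace SklarAux

set_option linter.unusedSectionVars false

variable (ρ : Measure ℝ) [IsProbabilityMeasure ρ]

/-- CDF of a probability measure on ℝ. -/
def cF (x : ℝ) : ℝ := (ρ (Iic x)).toReal

/-- Left limit of the CDF. -/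
def cFm (x : ℝ) : ℝ := (ρ (Iio x)).toReal

lemma cF_mono : Monotone (cF ρ) := fun _ _ hab =>
  ENNReal.toReal_mono (measure_ne_top _ _) (measure_mono (Iic_subset_Iic.2 hab))

lemma cFm_mono : Monotone (cFm ρ) := fun _ _ hab =>
  ENNReal.toReal_mono (measure_ne_top _ _) (measure_mono (Iio_subset_Iio_iff.2 hab))

lemma cF_nonneg (x : ℝ) : 0 ≤ cF ρ x := ENNReal.toReal_nonneg

lemma cFm_nonneg (x : ℝ) : 0 ≤ cFm ρ x := ENNReal.toReal_nonneg

lemma cF_le_one (x : ℝ) : cF ρ x ≤ 1 := by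
  have h : ρ (Iic x) ≤ 1 := prob_le_one
  simpa [cF] using ENNReal.toReal_mono (by simp) h

lemma cFm_le_cF (x : ℝ) : cFm ρ x ≤ cF ρ x :=
  ENNReal.toReal_mono (measure_ne_top _ _) (measure_mono Iio_subset_Iic_self)

lemma ofReal_cF (x : ℝ) : ENNReal.ofReal (cF ρ x) = ρ (Iic x) :=
  ENNReal.ofReal_toReal (measure_ne_top _ _)

lemma ofReal_cFm (x : ℝ) : ENNReal.ofReal (cFm ρ x) = ρ (Iio x) :=
  ENNReal.ofReal_toReal (measure_ne_top _ _)

lemma cF_tendsto_atTop : Filter.Tendsto (cF ρ) Filter.atTop (nhds 1) := by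
  have h := tendsto_measure_Iic_atTop ρ
  rw [measure_univ] at h
  have h2 := (ENNReal.tendsto_toReal (by simp : (1:ENNReal) ≠ ⊤)).comp h
  exact h2

lemma measurable_cF : Measurable (cF ρ) := (cF_mono ρ).measurable

lemma measurable_cFm : Measurable (cFm ρ) := (cFm_mono ρ).measurable

/-- The sublevel set of the CDF at level `u < 1` has measure at most `u`. -/
lemma meas_sublevel (u : ℝ) (hu : u < 1) : ρ {x | cF ρ x ≤ u} ≤ ENNReal.ofReal u := by
  set S : Set ℝ := {x | cF ρ x ≤ u} with hS
  have hdc : ∀ x ∈ S, ∀ y, y ≤ x → y ∈ S := fun x hx y hyx =>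
    le_trans (cF_mono ρ hyx) hx
  rcases S.eq_empty_or_nonempty with he | hne
  · simp [he]
  by_cases hbdd : BddAbove S
  · set r := sSup S with hr
    by_cases hmem : r ∈ S
    · have hsub : S ⊆ Iic r := fun x hx => le_csSup hbdd hx
      calc ρ S ≤ ρ (Iic r) := measure_mono hsub
        _ = ENNReal.ofReal (cF ρ r) := (ofReal_cF ρ r).symm
        _ ≤ ENNReal.ofReal u := ENNReal.ofReal_le_ofReal hmem
    · have hSeq : S = Iio r := by
        ext x
        constructor
        · intro hx
          exact lt_of_le_of_ne (le_csSup hbdd hx) (by rintro rfl; exact hmem hx)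
        · intro hx
          obtain ⟨g, hgS, hxg⟩ := exists_lt_of_lt_csSup hne hx
          exact hdc g hgS x hxg.le
      have hun : Iio r = ⋃ n : ℕ, Iic (r - 1/(n+1)) := by
        ext x
        simp only [mem_Iio, mem_iUnion, mem_Iic]
        constructor
        · intro hx
          obtain ⟨n, hn⟩ := exists_nat_one_div_lt (sub_pos.2 hx)
          exact ⟨n, by push_cast at hn ⊢; linarith⟩
        · rintro ⟨n, hn⟩
          have : (0:ℝ) < 1/(n+1) := by positivity
          linarith
      have hmono : Monotone (fun n : ℕ => Iic (r - 1/((n:ℝ)+1))) := by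
        intro m n hmn
        apply Iic_subset_Iic.2
        have h1 : (1:ℝ)/((n:ℝ)+1) ≤ 1/((m:ℝ)+1) := by
          apply one_div_le_one_div_of_le (by positivity)
          have h2 : (m:ℝ) ≤ (n:ℝ) := Nat.cast_le.mpr hmn
          linarith
        linarith
      rw [hSeq, hun, hmono.measure_iUnion]
      apply iSup_le
      intro n
      have hxS : r - 1/((n:ℝ)+1) ∈ S := by
        rw [hSeq]
        have : (0:ℝ) < 1/((n:ℝ)+1) := by positivity
        exact sub_lt_self r this
      rw [← ofReal_cF]
      exact ENNReal.ofReal_le_ofReal hxS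
  · exfalso
    have hall : ∀ x, cF ρ x ≤ u := by
      intro x
      obtain ⟨g, hgS, hxg⟩ := not_bddAbove_iff.1 hbdd x
      exact (hdc g hgS x hxg.le) 
    have : (1:ℝ) ≤ u := le_of_tendsto (cF_tendsto_atTop ρ) (Filter.Eventually.of_forall hall)
    linarith

/-- Existence of a quantile: a point `q` with `cFm q ≤ u ≤ cF q`. -/
lemma exists_quantile (u : ℝ) (h0 : 0 < u) (h1 : u < 1) :
    ∃ q : ℝ, cFm ρ q ≤ u ∧ u ≤ cF ρ q := by
  set S : Set ℝ := {x | u ≤ cF ρ x} with hS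
  have hne : S.Nonempty := by
    obtain ⟨x, hx⟩ := ((cF_tendsto_atTop ρ).eventually (eventually_ge_nhds h1)).exists
    exact ⟨x, hx⟩
  have hbdd : BddBelow S := by
    -- eventually at -infinity, cF < u, since measures of Iic tend to 0
    have hinter : (⋂ n : ℕ, Iic (-(n:ℝ))) = ∅ := by
      ext x
      simp only [mem_iInter, mem_Iic, mem_empty_iff_false, iff_false, not_forall, not_le]
      obtain ⟨n, hn⟩ := exists_nat_gt (-x)
      exact ⟨n, by linarith⟩
    have hm : Antitone (fun n : ℕ => Iic (-(n:ℝ))) := by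
      intro m n hmn
      apply Iic_subset_Iic.2
      have h2 : (m:ℝ) ≤ (n:ℝ) := Nat.cast_le.mpr hmn
      linarith
    have hinf : (⨅ n : ℕ, ρ (Iic (-(n:ℝ)))) = 0 := by
      rw [← Antitone.measure_iInter hm (fun n => (measurableSet_Iic).nullMeasurableSet)
        ⟨0, measure_ne_top _ _⟩, hinter, measure_empty]
    have : ∃ n : ℕ, ρ (Iic (-(n:ℝ))) < ENNReal.ofReal u := by
      by_contra hcon
      push_neg at hcon
      have := le_iInf hcon
      rw [hinf] at this
      simp only [nonpos_iff_eq_zero, ENNReal.ofReal_eq_zero] at this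
      linarith
    obtain ⟨n, hn⟩ := this
    refine ⟨-(n:ℝ), fun x hx => ?_⟩
    by_contra hlt
    push_neg at hlt
    have hle : ρ (Iic x) ≤ ρ (Iic (-(n:ℝ))) := measure_mono (Iic_subset_Iic.2 hlt.le)
    have hx' : u ≤ cF ρ x := hx
    have : ENNReal.ofReal u ≤ ρ (Iic (-(n:ℝ))) := by
      refine le_trans ?_ hle
      rw [← ofReal_cF]
      exact ENNReal.ofReal_le_ofReal hx'
    exact absurd this hn.not_ge
  set q := sInf S with hq
  have hqF : u ≤ cF ρ q := by
    -- right continuity via intersection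
    have hint : Iic q = ⋂ n : ℕ, Iic (q + 1/((n:ℝ)+1)) := by
      ext x
      simp only [mem_Iic, mem_iInter]
      constructor
      · intro hx n
        have : (0:ℝ) < 1/((n:ℝ)+1) := by positivity
        linarith
      · intro h
        by_contra hlt
        push_neg at hlt
        obtain ⟨n, hn⟩ := exists_nat_one_div_lt (sub_pos.2 hlt)
        have := h n
        push_cast at hn
        linarith
    have hmono : Antitone (fun n : ℕ => Iic (q + 1/((n:ℝ)+1))) := by
      intro m n hmn
      apply Iic_subset_Iic.2
      have h2 : (m:ℝ) ≤ (n:ℝ) := Nat.cast_le.mpr hmn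
      have h3 : (1:ℝ)/((n:ℝ)+1) ≤ 1/((m:ℝ)+1) := by
        apply one_div_le_one_div_of_le (by positivity)
        linarith
      linarith
    have : ρ (Iic q) = ⨅ n : ℕ, ρ (Iic (q + 1/((n:ℝ)+1))) := by
      rw [hint]
      exact (hmono.measure_iInter (fun n => measurableSet_Iic.nullMeasurableSet)
        ⟨0, measure_ne_top _ _⟩)
    have hlow : ENNReal.ofReal u ≤ ρ (Iic q) := by
      rw [this]
      refine le_iInf fun n => ?_
      have hpos : q < q + 1/((n:ℝ)+1) := by
        have : (0:ℝ) < 1/((n:ℝ)+1) := by positivity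
        linarith
      obtain ⟨s, hsS, hsl⟩ := csInf_lt_iff hbdd hne |>.1 hpos
      have : u ≤ cF ρ (q + 1/((n:ℝ)+1)) := le_trans hsS (cF_mono ρ hsl.le)
      rw [← ofReal_cF]
      exact ENNReal.ofReal_le_ofReal this
    have := ENNReal.toReal_mono (measure_ne_top _ _) hlow
    rwa [ENNReal.toReal_ofReal h0.le] at this
  have hqFm : cFm ρ q ≤ u := by
    have hun : Iio q = ⋃ n : ℕ, Iic (q - 1/((n:ℝ)+1)) := by
      ext x
      simp only [mem_Iio, mem_iUnion, mem_Iic]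
      constructor
      · intro hx
        obtain ⟨n, hn⟩ := exists_nat_one_div_lt (sub_pos.2 hx)
        push_cast at hn
        exact ⟨n, by linarith⟩
      · rintro ⟨n, hn⟩
        have : (0:ℝ) < 1/((n:ℝ)+1) := by positivity
        linarith
    have hmono : Monotone (fun n : ℕ => Iic (q - 1/((n:ℝ)+1))) := by
      intro m n hmn
      apply Iic_subset_Iic.2
      have h2 : (m:ℝ) ≤ (n:ℝ) := Nat.cast_le.mpr hmn
      have h3 : (1:ℝ)/((n:ℝ)+1) ≤ 1/((m:ℝ)+1) := by
        apply one_div_le_one_div_of_le (by positivity)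
        linarith
      linarith
    have hsup : ρ (Iio q) = ⨆ n : ℕ, ρ (Iic (q - 1/((n:ℝ)+1))) := by
      rw [hun, hmono.measure_iUnion]
    have hup : ρ (Iio q) ≤ ENNReal.ofReal u := by
      rw [hsup]
      refine iSup_le fun n => ?_
      have hnotin : q - 1/((n:ℝ)+1) ∉ S := by
        intro hmem
        have := csInf_le hbdd hmem
        have hp : (0:ℝ) < 1/((n:ℝ)+1) := by positivity
        rw [← hq] at this
        linarith
      have hlt : cF ρ (q - 1/((n:ℝ)+1)) < u := not_le.1 hnotin
      rw [← ofReal_cF]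
      exact ENNReal.ofReal_le_ofReal hlt.le
    have := ENNReal.toReal_mono (by simp) hup
    rwa [ENNReal.toReal_ofReal h0.le] at this
  exact ⟨q, hqFm, hqF⟩



/-- Uniform measure on `[0,1]`. -/
def lam0 : Measure ℝ := volume.restrict (Icc 0 1)

instance : IsProbabilityMeasure lam0 :=
  ⟨by rw [lam0, Measure.restrict_apply_univ, Real.volume_Icc]; norm_num⟩

lemma lam0_apply (s : Set ℝ) (hs : MeasurableSet s) : lam0 s = volume (s ∩ Icc 0 1) :=
  Measure.restrict_apply hs

lemma lam0_Icc : lam0 (Icc 0 1) = 1 := by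
  rw [lam0_apply _ measurableSet_Icc, inter_self, Real.volume_Icc]
  norm_num

lemma lam0_Iic_zero : lam0 (Iic 0) = 0 := by
  rw [lam0_apply _ measurableSet_Iic]
  have : Iic (0:ℝ) ∩ Icc 0 1 = {0} := by
    ext x
    simp only [mem_inter_iff, mem_Iic, mem_Icc, mem_singleton_iff]
    constructor
    · rintro ⟨h1, h2, _⟩; linarith
    · rintro rfl; norm_num
  rw [this]
  simp

lemma lam0_compl_Icc : lam0 (Icc 0 1)ᶜ = 0 := by
  rw [lam0_apply _ measurableSet_Icc.compl, compl_inter_self]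
  simp

lemma lam0_Iic (τ : ℝ) (h0 : 0 ≤ τ) (h1 : τ ≤ 1) : lam0 (Iic τ) = ENNReal.ofReal τ := by
  rw [lam0_apply _ measurableSet_Iic]
  have : Iic τ ∩ Icc 0 1 = Icc 0 τ := by
    ext x
    simp only [mem_inter_iff, mem_Iic, mem_Icc]
    constructor
    · rintro ⟨ha, hb, _⟩; exact ⟨hb, ha⟩
    · rintro ⟨ha, hb⟩; exact ⟨hb, ha, hb.trans h1⟩
  rw [this, Real.volume_Icc, sub_zero]

variable {Ω : Type*} [MeasurableSpace Ω]

/-- The distributional transform. -/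
def dtrans (ρ : Measure ℝ) (X : Ω → ℝ) (p : Ω × ℝ) : ℝ :=
  cFm ρ (X p.1) + p.2 * (cF ρ (X p.1) - cFm ρ (X p.1))

lemma measurable_dtrans (ρ : Measure ℝ) [IsProbabilityMeasure ρ] {X : Ω → ℝ}
    (hX : Measurable X) : Measurable (dtrans ρ X) := by
  have h1 : Measurable fun p : Ω × ℝ => cFm ρ (X p.1) :=
    (measurable_cFm ρ).comp (hX.comp measurable_fst)
  have h2 : Measurable fun p : Ω × ℝ => cF ρ (X p.1) :=
    (measurable_cF ρ).comp (hX.comp measurable_fst)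
  exact h1.add (measurable_snd.mul (h2.sub h1))

lemma dtrans_le_cF (ρ : Measure ℝ) [IsProbabilityMeasure ρ] (X : Ω → ℝ) (p : Ω × ℝ)
    (ht : p.2 ≤ 1) : dtrans ρ X p ≤ cF ρ (X p.1) := by
  have h := cFm_le_cF ρ (X p.1)
  have : p.2 * (cF ρ (X p.1) - cFm ρ (X p.1)) ≤ 1 * (cF ρ (X p.1) - cFm ρ (X p.1)) :=
    mul_le_mul_of_nonneg_right ht (by linarith)
  unfold dtrans
  linarith

lemma cFm_le_dtrans (ρ : Measure ℝ) [IsProbabilityMeasure ρ] (X : Ω → ℝ) (p : Ω × ℝ)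
    (ht : 0 ≤ p.2) : cFm ρ (X p.1) ≤ dtrans ρ X p := by
  have h := cFm_le_cF ρ (X p.1)
  have : 0 ≤ p.2 * (cF ρ (X p.1) - cFm ρ (X p.1)) := mul_nonneg ht (by linarith)
  unfold dtrans
  linarith

lemma cF_le_cFm_of_lt (ρ : Measure ℝ) [IsProbabilityMeasure ρ] {x q : ℝ} (h : x < q) :
    cF ρ x ≤ cFm ρ q :=
  ENNReal.toReal_mono (measure_ne_top _ _) (measure_mono (fun y hy => lt_of_le_of_lt hy h))

/-- **Uniformity of the distributional transform.** -/
lemma unif (μ : Measure Ω) [IsProbabilityMeasure μ] (X : Ω → ℝ) (hX : Measurable X)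
    (u : ℝ) (hu0 : 0 ≤ u) (hu1 : u ≤ 1) :
    (μ.prod lam0) {p | dtrans (μ.map X) X p ≤ u} = ENNReal.ofReal u := by
  set ρ := μ.map X with hρ
  haveI : IsProbabilityMeasure ρ := Measure.isProbabilityMeasure_map hX.aemeasurable
  have hmap : ∀ s : Set ℝ, MeasurableSet s → μ (X ⁻¹' s) = ρ s := fun s hs =>
    (Measure.map_apply hX hs).symm
  set ν := μ.prod lam0 with hν
  haveI : IsProbabilityMeasure ν := by rw [hν]; infer_instance
  set E := {p : Ω × ℝ | dtrans ρ X p ≤ u} with hE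
  have hUm : Measurable (dtrans ρ X) := measurable_dtrans ρ hX
  have hEm : MeasurableSet E := measurableSet_le hUm measurable_const
  rcases eq_or_lt_of_le hu1 with h1 | h1
  · -- u = 1
    subst h1
    have hcompl : Eᶜ ⊆ univ ×ˢ (Icc (0:ℝ) 1)ᶜ := by
      intro p hp
      simp only [hE, mem_compl_iff, mem_setOf_eq, not_le] at hp
      refine ⟨mem_univ _, fun htIcc => ?_⟩
      have := dtrans_le_cF ρ X p htIcc.2
      have := cF_le_one ρ (X p.1)
      linarith
    have hc0 : ν Eᶜ = 0 := by
      refine measure_mono_null hcompl ?_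
      rw [hν, Measure.prod_prod, lam0_compl_Icc, mul_zero]
    have := prob_compl_eq_zero_iff hEm |>.1 hc0
    rw [this]
    simp
  rcases eq_or_lt_of_le hu0 with h0 | h0
  · -- u = 0
    rw [← h0]
    simp only [ENNReal.ofReal_zero]
    have hsub : E ⊆ ((X ⁻¹' {x | cF ρ x ≤ 0}) ×ˢ univ) ∪ (univ ×ˢ Iic (0:ℝ)) := by
      rintro ⟨ω, t⟩ hp
      simp only [hE, mem_setOf_eq, ← h0] at hp
      by_cases hF : cF ρ (X ω) ≤ 0
      · exact Or.inl ⟨hF, mem_univ _⟩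
      · push_neg at hF
        refine Or.inr ⟨mem_univ _, ?_⟩
        simp only [mem_Iic]
        by_contra htpos
        push_neg at htpos
        have hFm := cFm_nonneg ρ (X ω)
        have hle := cFm_le_cF ρ (X ω)
        unfold dtrans at hp
        rcases eq_or_lt_of_le hle with he | hlt
        · rw [← he] at hp hF; simp only at hp; nlinarith
        · have := mul_pos htpos (sub_pos.2 hlt)
          simp only at hp
          nlinarith
    have hGm : MeasurableSet {x | cF ρ x ≤ 0} :=
      measurableSet_le (measurable_cF ρ) measurable_const
    have h1' : ν ((X ⁻¹' {x | cF ρ x ≤ 0}) ×ˢ univ) = 0 := by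
      rw [hν, Measure.prod_prod, hmap _ hGm, measure_univ, mul_one]
      have := meas_sublevel ρ 0 one_pos
      simpa using this
    have h2' : ν (univ ×ˢ Iic (0:ℝ)) = 0 := by
      rw [hν, Measure.prod_prod, lam0_Iic_zero, mul_zero]
    refine le_antisymm ?_ zero_le
    calc ν E ≤ ν (((X ⁻¹' {x | cF ρ x ≤ 0}) ×ˢ univ) ∪ (univ ×ˢ Iic (0:ℝ))) :=
          measure_mono hsub
      _ ≤ _ + _ := measure_union_le _ _
      _ = 0 := by rw [h1', h2', add_zero]
  -- main case 0 < u < 1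
  obtain ⟨q, hqm, hqF⟩ := exists_quantile ρ u h0 h1
  set P1 : Set Ω := {ω | X ω < q} with hP1
  set P2 : Set Ω := {ω | X ω = q} with hP2
  set P3 : Set Ω := {ω | q < X ω} with hP3
  have hP1m : MeasurableSet P1 := hX measurableSet_Iio
  have hP2m : MeasurableSet P2 := hX (measurableSet_singleton q)
  have hP3m : MeasurableSet P3 := hX measurableSet_Ioi
  -- split E into three pieces
  have hsplit : E = (E ∩ P1 ×ˢ univ) ∪ (E ∩ P2 ×ˢ univ) ∪ (E ∩ P3 ×ˢ univ) := by
    ext p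
    simp only [mem_union, mem_inter_iff, mem_prod, mem_univ, and_true, hP1, hP2, hP3,
      mem_setOf_eq]
    constructor
    · intro hp
      rcases lt_trichotomy (X p.1) q with h | h | h
      · exact Or.inl (Or.inl ⟨hp, h⟩)
      · exact Or.inl (Or.inr ⟨hp, h⟩)
      · exact Or.inr ⟨hp, h⟩
    · rintro ((⟨hp, _⟩ | ⟨hp, _⟩) | ⟨hp, _⟩) <;> exact hp
  have hdis12 : Disjoint (E ∩ P1 ×ˢ univ) (E ∩ P2 ×ˢ univ) := by
    rw [Set.disjoint_left]
    rintro p ⟨_, hp1, _⟩ ⟨_, hp2, _⟩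
    simp only [hP1, hP2, mem_setOf_eq] at hp1 hp2
    exact absurd hp2 (ne_of_lt hp1)
  have hdis3 : Disjoint ((E ∩ P1 ×ˢ univ) ∪ (E ∩ P2 ×ˢ univ)) (E ∩ P3 ×ˢ univ) := by
    rw [Set.disjoint_left]
    rintro p (⟨_, hp1, _⟩ | ⟨_, hp1, _⟩) ⟨_, hp3, _⟩ <;>
      simp only [hP1, hP2, hP3, mem_setOf_eq] at hp1 hp3
    · exact absurd (hp1.trans hp3) (lt_irrefl _)
    · exact absurd hp1 (ne_of_gt hp3)
  have hm2 : MeasurableSet (E ∩ P2 ×ˢ univ) := hEm.inter (hP2m.prod MeasurableSet.univ)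
  have hm3 : MeasurableSet (E ∩ P3 ×ˢ univ) := hEm.inter (hP3m.prod MeasurableSet.univ)
  have hsum : ν E = ν (E ∩ P1 ×ˢ univ) + ν (E ∩ P2 ×ˢ univ) + ν (E ∩ P3 ×ˢ univ) := by
    nth_rewrite 1 [hsplit]
    rw [measure_union hdis3 hm3, measure_union hdis12 hm2]
  -- piece 1
  have hpiece1 : ν (E ∩ P1 ×ˢ univ) = ENNReal.ofReal (cFm ρ q) := by
    have hμP1 : μ P1 = ENNReal.ofReal (cFm ρ q) := by
      have hps : P1 = X ⁻¹' Iio q := rfl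
      rw [hps, hmap _ measurableSet_Iio, ofReal_cFm]
    refine le_antisymm ?_ ?_
    · calc ν (E ∩ P1 ×ˢ univ) ≤ ν (P1 ×ˢ univ) := measure_mono inter_subset_right
        _ = μ P1 * lam0 univ := by rw [hν, Measure.prod_prod]
        _ = ENNReal.ofReal (cFm ρ q) := by rw [measure_univ, mul_one, hμP1]
    · have hsub : P1 ×ˢ Icc (0:ℝ) 1 ⊆ E ∩ P1 ×ˢ univ := by
        rintro ⟨ω, t⟩ ⟨hω, ht⟩
        simp only [hP1, mem_setOf_eq] at hω
        refine ⟨?_, hω, mem_univ _⟩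
        simp only [hE, mem_setOf_eq]
        calc dtrans ρ X (ω, t) ≤ cF ρ (X ω) := dtrans_le_cF ρ X (ω, t) ht.2
          _ ≤ cFm ρ q := cF_le_cFm_of_lt ρ hω
          _ ≤ u := hqm
      calc ENNReal.ofReal (cFm ρ q) = μ P1 * lam0 (Icc 0 1) := by
            rw [lam0_Icc, mul_one, hμP1]
        _ = ν (P1 ×ˢ Icc (0:ℝ) 1) := by rw [hν, Measure.prod_prod]
        _ ≤ ν (E ∩ P1 ×ˢ univ) := measure_mono hsub
  -- piece 2
  have hμP2 : μ P2 = ENNReal.ofReal (cF ρ q - cFm ρ q) := by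
    have hps : P2 = X ⁻¹' {q} := rfl
    have hsingle : ({q} : Set ℝ) = Iic q \ Iio q := by
      ext x
      simp only [mem_singleton_iff, mem_diff, mem_Iic, mem_Iio, not_lt]
      constructor
      · rintro rfl; exact ⟨le_rfl, le_rfl⟩
      · rintro ⟨hx1, hx2⟩; exact le_antisymm hx1 hx2
    rw [hps, hmap _ (measurableSet_singleton q), hsingle,
      measure_diff Iio_subset_Iic_self measurableSet_Iio.nullMeasurableSet (measure_ne_top _ _),
      ← ofReal_cF, ← ofReal_cFm, ← ENNReal.ofReal_sub _ (cFm_nonneg ρ q)]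
  have hpiece2 : ν (E ∩ P2 ×ˢ univ) = ENNReal.ofReal (u - cFm ρ q) := by
    have hset : E ∩ P2 ×ˢ univ = P2 ×ˢ {t : ℝ | cFm ρ q + t * (cF ρ q - cFm ρ q) ≤ u} := by
      ext ⟨ω, t⟩
      simp only [mem_inter_iff, mem_prod, mem_univ, and_true, hE, hP2, mem_setOf_eq]
      constructor
      · rintro ⟨hd, hω⟩
        unfold dtrans at hd
        rw [hω] at hd
        exact ⟨hω, hd⟩
      · rintro ⟨hω, hd⟩
        refine ⟨?_, hω⟩
        unfold dtrans
        rw [hω]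
        exact hd
    rw [hset, hν, Measure.prod_prod, hμP2]
    by_cases hd : cF ρ q = cFm ρ q
    · have hu_eq : u = cFm ρ q := le_antisymm (hd ▸ hqF : u ≤ cFm ρ q) hqm
      rw [hd, sub_self, ENNReal.ofReal_zero, zero_mul, ← hu_eq, sub_self, ENNReal.ofReal_zero]
    · have hdpos : 0 < cF ρ q - cFm ρ q := lt_of_le_of_ne (by linarith [cFm_le_cF ρ q])
        (fun h => hd (by linarith))
      set τ := (u - cFm ρ q) / (cF ρ q - cFm ρ q) with hτ
      have hTeq : {t : ℝ | cFm ρ q + t * (cF ρ q - cFm ρ q) ≤ u} = Iic τ := by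
        ext t
        simp only [mem_setOf_eq, mem_Iic, hτ]
        rw [le_div_iff₀ hdpos]
        constructor <;> intro h <;> linarith
      have hτ0 : 0 ≤ τ := div_nonneg (by linarith) hdpos.le
      have hτ1 : τ ≤ 1 := by
        rw [hτ, div_le_one hdpos]
        linarith
      rw [hTeq, lam0_Iic τ hτ0 hτ1, ← ENNReal.ofReal_mul (by linarith [cFm_le_cF ρ q]), hτ,
        mul_div_cancel₀ _ (ne_of_gt hdpos)]
  -- piece 3
  have hpiece3 : ν (E ∩ P3 ×ˢ univ) = 0 := by
    set G : Set ℝ := {x | q < x ∧ cF ρ x ≤ u} with hG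
    have hGm : MeasurableSet G :=
      (measurableSet_lt measurable_const measurable_id).inter
        (measurableSet_le (measurable_cF ρ) measurable_const)
    have hsub : E ∩ P3 ×ˢ univ ⊆ ((X ⁻¹' G) ×ˢ univ) ∪ (univ ×ˢ Iic (0:ℝ)) := by
      rintro ⟨ω, t⟩ ⟨hd, hω, _⟩
      simp only [hE, hP3, mem_setOf_eq] at hd hω
      by_cases hFx : cF ρ (X ω) ≤ u
      · exact Or.inl ⟨⟨hω, hFx⟩, mem_univ _⟩
      · push_neg at hFx
        refine Or.inr ⟨mem_univ _, ?_⟩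
        simp only [mem_Iic]
        have hFmx : u ≤ cFm ρ (X ω) := by
          refine le_trans hqF ?_
          exact ENNReal.toReal_mono (measure_ne_top _ _)
            (measure_mono (fun y hy => lt_of_le_of_lt hy hω))
        have hle := cFm_le_cF ρ (X ω)
        unfold dtrans at hd
        rcases eq_or_lt_of_le hle with he | hlt
        · exfalso
          rw [← he] at hd hFx
          ring_nf at hd
          linarith
        · by_contra htpos
          push_neg at htpos
          have := mul_pos htpos (sub_pos.2 hlt)
          linarith
    have hρG : ρ G = 0 := by
      rcases G.eq_empty_or_nonempty with he | ⟨g, hg1, hg2⟩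
      · rw [he, measure_empty]
      · have hFq_eq : cF ρ q = u := le_antisymm (le_trans (cF_mono ρ hg1.le) hg2) hqF
        have hGset : G = {x | cF ρ x ≤ u} \ Iic q := by
          ext x
          simp only [hG, mem_setOf_eq, mem_diff, mem_Iic, not_le]
          tauto
        have hsub2 : Iic q ⊆ {x | cF ρ x ≤ u} := fun x hx => by
          simp only [mem_setOf_eq]
          calc cF ρ x ≤ cF ρ q := cF_mono ρ hx
            _ = u := hFq_eq
        rw [hGset, measure_diff hsub2 measurableSet_Iic.nullMeasurableSet (measure_ne_top _ _),
          ← ofReal_cF, hFq_eq, tsub_eq_zero_iff_le]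
        exact meas_sublevel ρ u h1
    refine le_antisymm ?_ zero_le
    calc ν (E ∩ P3 ×ˢ univ) ≤ ν (((X ⁻¹' G) ×ˢ univ) ∪ (univ ×ˢ Iic (0:ℝ))) :=
          measure_mono hsub
      _ ≤ ν ((X ⁻¹' G) ×ˢ univ) + ν (univ ×ˢ Iic (0:ℝ)) := measure_union_le _ _
      _ = 0 := by
          rw [hν, Measure.prod_prod, Measure.prod_prod, hmap _ hGm, hρG, zero_mul,
            lam0_Iic_zero, mul_zero, add_zero]
  rw [hsum, hpiece1, hpiece2, hpiece3, add_zero,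
    ← ENNReal.ofReal_add (cFm_nonneg ρ q) (by linarith)]
  ring_nf


/-- The transformed variable `dtrans` is a.e. below `cF a` exactly when `X ≤ a`. -/
lemma dtrans_ae_eq (μ : Measure Ω) [IsProbabilityMeasure μ] (X : Ω → ℝ) (hX : Measurable X)
    (a : ℝ) :
    {p : Ω × ℝ | dtrans (μ.map X) X p ≤ cF (μ.map X) a}
      =ᵐ[μ.prod lam0] {p : Ω × ℝ | X p.1 ≤ a} := by
  set ρ := μ.map X with hρ
  haveI : IsProbabilityMeasure ρ := Measure.isProbabilityMeasure_map hX.aemeasurable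
  set ν := μ.prod lam0 with hν
  set s := {p : Ω × ℝ | dtrans ρ X p ≤ cF ρ a} with hs
  set t := {p : Ω × ℝ | X p.1 ≤ a} with ht
  have htm : MeasurableSet t := (hX.comp measurable_fst) measurableSet_Iic
  have hνs : ν s = ENNReal.ofReal (cF ρ a) :=
    unif μ X hX (cF ρ a) (cF_nonneg ρ a) (cF_le_one ρ a)
  have hmapIic : μ (X ⁻¹' Iic a) = ρ (Iic a) := (Measure.map_apply hX measurableSet_Iic).symm
  have hbase : ν ({ω | X ω ≤ a} ×ˢ Icc (0:ℝ) 1) = ENNReal.ofReal (cF ρ a) := by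
    rw [hν, Measure.prod_prod, lam0_Icc, mul_one]
    have : {ω | X ω ≤ a} = X ⁻¹' Iic a := rfl
    rw [this, hmapIic, ofReal_cF]
  have hsub : ({ω | X ω ≤ a} ×ˢ Icc (0:ℝ) 1) ⊆ s ∩ t := by
    rintro ⟨ω, r⟩ ⟨hω, hr⟩
    simp only [mem_setOf_eq] at hω
    refine ⟨?_, hω⟩
    simp only [hs, mem_setOf_eq]
    calc dtrans ρ X (ω, r) ≤ cF ρ (X ω) := dtrans_le_cF ρ X (ω, r) hr.2
      _ ≤ cF ρ a := cF_mono ρ hω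
  rw [MeasureTheory.ae_eq_set]
  constructor
  · -- ν (s \ t) = 0
    have key : ν (s ∩ t) + ν (s \ t) = ν s := measure_inter_add_diff s htm
    rw [hνs] at key
    have hge : ENNReal.ofReal (cF ρ a) ≤ ν (s ∩ t) := by
      rw [← hbase]; exact measure_mono hsub
    have hne : ν (s ∩ t) ≠ ⊤ := measure_ne_top _ _
    have : ν (s ∩ t) + ν (s \ t) ≤ ν (s ∩ t) + 0 := by
      rw [add_zero, key]; exact hge
    have := (ENNReal.add_le_add_iff_left hne).1 this
    exact le_antisymm this zero_le
  · -- ν (t \ s) = 0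
    have hsub2 : t \ s ⊆ univ ×ˢ (Icc (0:ℝ) 1)ᶜ := by
      rintro ⟨ω, r⟩ ⟨hωt, hωs⟩
      refine ⟨mem_univ _, fun hr => hωs ?_⟩
      simp only [ht, mem_setOf_eq] at hωt
      simp only [hs, mem_setOf_eq]
      calc dtrans ρ X (ω, r) ≤ cF ρ (X ω) := dtrans_le_cF ρ X (ω, r) hr.2
        _ ≤ cF ρ a := cF_mono ρ hωt
    refine measure_mono_null hsub2 ?_
    rw [hν, Measure.prod_prod, lam0_compl_Icc, mul_zero]

end SklarAux

end SklarAux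


/-- A `2`-copula, modeled as a function `C : ℝ → ℝ → ℝ` whose defining properties are
required on the unit square `[0,1]²`: `C u v ∈ [0,1]`; `C u 0 = C 0 v = 0`;
`C u 1 = u` and `C 1 v = v`; and `C` is 2-increasing:
`C u₂ v₂ - C u₂ v₁ - C u₁ v₂ + C u₁ v₁ ≥ 0` whenever `u₁ ≤ u₂` and `v₁ ≤ v₂`. -/
def IsCopula2 (C : ℝ → ℝ → ℝ) : Prop :=
  (∀ u ∈ Set.Icc (0:ℝ) 1, ∀ v ∈ Set.Icc (0:ℝ) 1, C u v ∈ Set.Icc (0:ℝ) 1) ∧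
  (∀ u ∈ Set.Icc (0:ℝ) 1, C u 0 = 0) ∧
  (∀ v ∈ Set.Icc (0:ℝ) 1, C 0 v = 0) ∧
  (∀ u ∈ Set.Icc (0:ℝ) 1, C u 1 = u) ∧
  (∀ v ∈ Set.Icc (0:ℝ) 1, C 1 v = v) ∧
  (∀ u₁ u₂ v₁ v₂ : ℝ, u₁ ∈ Set.Icc (0:ℝ) 1 → u₂ ∈ Set.Icc (0:ℝ) 1 →
    v₁ ∈ Set.Icc (0:ℝ) 1 → v₂ ∈ Set.Icc (0:ℝ) 1 → u₁ ≤ u₂ → v₁ ≤ v₂ →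
    0 ≤ C u₂ v₂ - C u₂ v₁ - C u₁ v₂ + C u₁ v₁)

/-- **Sklar's theorem (existence, bivariate case).** For real-valued random variables
`A`, `B` on a common probability space with joint CDF `H(a,b) = P(A ≤ a, B ≤ b)` and
marginal CDFs `ΦA`, `ΦB`, there exists a 2-copula `C` such that
`H(a,b) = C (ΦA a) (ΦB b)` for all `a b : ℝ`. -/
theorem sklar_existence
    {Ω : Type*} [MeasurableSpace Ω] (μ : Measure Ω) [IsProbabilityMeasure μ]
    (A B : Ω → ℝ) (hA : Measurable A) (hB : Measurable B)
    (ΦA ΦB : ℝ → ℝ)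
    (hΦA : ∀ x : ℝ, ΦA x = (μ {ω | A ω ≤ x}).toReal)
    (hΦB : ∀ x : ℝ, ΦB x = (μ {ω | B ω ≤ x}).toReal) :
    ∃ C : ℝ → ℝ → ℝ, IsCopula2 C ∧
      ∀ a b : ℝ, (μ {ω | A ω ≤ a ∧ B ω ≤ b}).toReal = C (ΦA a) (ΦB b) := by

  classical
  set ρA := μ.map A with hρA
  set ρB := μ.map B with hρB
  haveI : IsProbabilityMeasure ρA := Measure.isProbabilityMeasure_map hA.aemeasurable
  haveI : IsProbabilityMeasure ρB := Measure.isProbabilityMeasure_map hB.aemeasurable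
  set ν := μ.prod SklarAux.lam0 with hν
  haveI : IsProbabilityMeasure ν := by rw [hν]; infer_instance
  set s : ℝ → Set (Ω × ℝ) := fun u => {p | SklarAux.dtrans ρA A p ≤ u} with hsdef
  set t : ℝ → Set (Ω × ℝ) := fun v => {p | SklarAux.dtrans ρB B p ≤ v} with htdef
  have hsm : ∀ u, MeasurableSet (s u) := fun u =>
    measurableSet_le (SklarAux.measurable_dtrans ρA hA) measurable_const
  have htm : ∀ v, MeasurableSet (t v) := fun v =>
    measurableSet_le (SklarAux.measurable_dtrans ρB hB) measurable_const
  have hsmono : ∀ {u₁ u₂}, u₁ ≤ u₂ → s u₁ ⊆ s u₂ := fun h p hp => le_trans hp h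
  have htmono : ∀ {v₁ v₂}, v₁ ≤ v₂ → t v₁ ⊆ t v₂ := fun h p hp => le_trans hp h
  have hsu : ∀ u, 0 ≤ u → u ≤ 1 → ν (s u) = ENNReal.ofReal u := fun u h0 h1 =>
    SklarAux.unif μ A hA u h0 h1
  have htv : ∀ v, 0 ≤ v → v ≤ 1 → ν (t v) = ENNReal.ofReal v := fun v h0 h1 =>
    SklarAux.unif μ B hB v h0 h1
  set C : ℝ → ℝ → ℝ := fun u v => (ν (s u ∩ t v)).toReal with hC
  have hfin : ∀ S : Set (Ω × ℝ), ν S ≠ ⊤ := fun S => measure_ne_top _ _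
  refine ⟨C, ⟨?_, ?_, ?_, ?_, ?_, ?_⟩, ?_⟩
  · -- range in [0,1]
    intro u _ v _
    constructor
    · exact ENNReal.toReal_nonneg
    · have h := prob_le_one (μ := ν) (s := s u ∩ t v)
      simpa using ENNReal.toReal_mono (by simp) h
  · -- C u 0 = 0
    intro u _
    have : ν (s u ∩ t 0) = 0 := by
      refine le_antisymm ?_ zero_le
      calc ν (s u ∩ t 0) ≤ ν (t 0) := measure_mono inter_subset_right
        _ = ENNReal.ofReal 0 := htv 0 le_rfl zero_le_one
        _ = 0 := by simp
    simp [hC, this]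
  · -- C 0 v = 0
    intro v _
    have : ν (s 0 ∩ t v) = 0 := by
      refine le_antisymm ?_ zero_le
      calc ν (s 0 ∩ t v) ≤ ν (s 0) := measure_mono inter_subset_left
        _ = ENNReal.ofReal 0 := hsu 0 le_rfl zero_le_one
        _ = 0 := by simp
    simp [hC, this]
  · -- C u 1 = u
    intro u hu
    have hcompl : ν (t 1)ᶜ = 0 := by
      rw [prob_compl_eq_zero_iff (htm 1)]
      rw [htv 1 zero_le_one le_rfl]
      simp
    have : ν (s u ∩ t 1) = ν (s u) := measure_inter_conull hcompl
    rw [hC]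
    simp only
    rw [this, hsu u hu.1 hu.2, ENNReal.toReal_ofReal hu.1]
  · -- C 1 v = v
    intro v hv
    have hcompl : ν (s 1)ᶜ = 0 := by
      rw [prob_compl_eq_zero_iff (hsm 1)]
      rw [hsu 1 zero_le_one le_rfl]
      simp
    have : ν (s 1 ∩ t v) = ν (t v) := by
      rw [inter_comm]
      exact measure_inter_conull hcompl
    rw [hC]
    simp only
    rw [this, htv v hv.1 hv.2, ENNReal.toReal_ofReal hv.1]
  · -- 2-increasing
    intro u₁ u₂ v₁ v₂ _ _ _ _ hu hv
    have hinter : (s u₂ ∩ t v₁) ∩ (s u₁ ∩ t v₂) = s u₁ ∩ t v₁ := by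
      apply subset_antisymm
      · rintro p ⟨⟨_, hp2⟩, hp3, _⟩; exact ⟨hp3, hp2⟩
      · rintro p ⟨hp1, hp2⟩
        exact ⟨⟨hsmono hu hp1, hp2⟩, hp1, htmono hv hp2⟩
    have hunion : (s u₂ ∩ t v₁) ∪ (s u₁ ∩ t v₂) ⊆ s u₂ ∩ t v₂ := by
      rintro p (⟨hp1, hp2⟩ | ⟨hp1, hp2⟩)
      · exact ⟨hp1, htmono hv hp2⟩
      · exact ⟨hsmono hu hp1, hp2⟩
    have key : ν (s u₂ ∩ t v₁) + ν (s u₁ ∩ t v₂) ≤ ν (s u₂ ∩ t v₂) + ν (s u₁ ∩ t v₁) := by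
      rw [← measure_union_add_inter (s u₂ ∩ t v₁) ((hsm u₁).inter (htm v₂)), hinter]
      exact add_le_add_left (measure_mono hunion) _
    have key' : C u₂ v₁ + C u₁ v₂ ≤ C u₂ v₂ + C u₁ v₁ := by
      rw [hC]
      simp only
      rw [← ENNReal.toReal_add (hfin _) (hfin _), ← ENNReal.toReal_add (hfin _) (hfin _)]
      exact ENNReal.toReal_mono (by
        exact ENNReal.add_ne_top.2 ⟨hfin _, hfin _⟩) key
    linarith
  · -- the Sklar identity
    intro a b
    have hΦAa : ΦA a = SklarAux.cF ρA a := by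
      rw [hΦA a]
      have : {ω | A ω ≤ a} = A ⁻¹' Iic a := rfl
      rw [this, ← Measure.map_apply hA measurableSet_Iic]
      rfl
    have hΦBb : ΦB b = SklarAux.cF ρB b := by
      rw [hΦB b]
      have : {ω | B ω ≤ b} = B ⁻¹' Iic b := rfl
      rw [this, ← Measure.map_apply hB measurableSet_Iic]
      rfl
    have hae1 : s (SklarAux.cF ρA a) =ᵐ[ν] {p : Ω × ℝ | A p.1 ≤ a} :=
      SklarAux.dtrans_ae_eq μ A hA a
    have hae2 : t (SklarAux.cF ρB b) =ᵐ[ν] {p : Ω × ℝ | B p.1 ≤ b} :=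
      SklarAux.dtrans_ae_eq μ B hB b
    have hae : (s (SklarAux.cF ρA a) ∩ t (SklarAux.cF ρB b) : Set (Ω × ℝ))
        =ᵐ[ν] (({p : Ω × ℝ | A p.1 ≤ a} ∩ {p : Ω × ℝ | B p.1 ≤ b} : Set (Ω × ℝ))) :=
      hae1.inter hae2
    have hmeas_eq : ν (s (SklarAux.cF ρA a) ∩ t (SklarAux.cF ρB b))
        = ν ({p : Ω × ℝ | A p.1 ≤ a} ∩ {p : Ω × ℝ | B p.1 ≤ b}) := measure_congr hae
    have hprodset : ({p : Ω × ℝ | A p.1 ≤ a} ∩ {p : Ω × ℝ | B p.1 ≤ b})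
        = {ω | A ω ≤ a ∧ B ω ≤ b} ×ˢ univ := by
      ext ⟨ω, r⟩
      simp only [mem_inter_iff, mem_setOf_eq, mem_prod, mem_univ, and_true]
    rw [hC, hΦAa, hΦBb]
    simp only
    rw [hmeas_eq, hprodset, hν, Measure.prod_prod, measure_univ, mul_one]
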